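/- arXiv:0902.4097 — 4 statements merged into one kernel-verified Lean document; each statement's English description precedes it below -/
import Mathlib

section
/- Let 0 < 2M ≤ R₁, let ρ : [2M, R₁] → ℝ be nonnegative and integrable, define m(r) = M - ∫_r^{R₁} 4πη²ρ(η) dη and assume 0 ≤ 2m(r)/r < 1 for all r ∈ [2M, R₁], and set e^{2λ(r)} = (1 - 2m(r)/r)⁻¹. Then for all r ∈ [2M, R₁], exp(-2 ∫_r^{R₁} 4πη ρ(η) e^{2λ(η)} dη) ≥ (r - 2M)/(r - 2m(r)). -/
open Real MeasureTheory intervalIntegral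

/-- Elementary logarithm step inequality: `d/c ≤ log(c+d) - log c + (d/c)²`. -/
private lemma log_step {c d : ℝ} (hc : 0 < c) (hd : 0 ≤ d) :
    d / c ≤ Real.log (c + d) - Real.log c + (d / c) ^ 2 := by
  have hcd : 0 < c + d := by linarith
  have h1 : Real.log (c + d) - Real.log c = Real.log ((c + d) / c) :=
    (Real.log_div (ne_of_gt hcd) (ne_of_gt hc)).symm
  have hu0 : 0 ≤ d / c := div_nonneg hd hc.le
  set u := d / c with hu
  have h2 : (c + d) / c = 1 + u := by rw [hu]; field_simp
  have h1u : (0:ℝ) < 1 + u := by linarith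
  have h3 : u / (1 + u) ≤ Real.log (1 + u) := by
    have h := Real.log_le_sub_one_of_pos (x := (1 + u)⁻¹) (by positivity)
    rw [Real.log_inv] at h
    have h4 : (1 + u)⁻¹ - 1 = -(u / (1 + u)) := by field_simp; ring
    rw [h4] at h
    linarith
  have h5 : u - u / (1 + u) ≤ u ^ 2 := by
    have he : u - u / (1 + u) = u ^ 2 / (1 + u) := by field_simp; ring
    rw [he]
    exact div_le_self (by positivity) (by linarith)
  rw [h1, h2]
  linarith

/-- The key elementary inequality: for nonnegative integrable `q` on `[r,R]`,
with `B s = ∫_s^R q`, we have `∫_r^R q/(a+B) ≤ log(a + B r) - log a`. -/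
private lemma key_log_bound (a r R : ℝ) (ha : 0 < a) (hrR : r ≤ R) (q : ℝ → ℝ)
    (hq0 : ∀ x ∈ Set.Icc r R, 0 ≤ q x)
    (hqi : IntegrableOn q (Set.Icc r R))
    (hgi : IntegrableOn (fun η => q η / (a + ∫ x in η..R, q x)) (Set.Icc r R)) :
    (∫ η in r..R, q η / (a + ∫ x in η..R, q x)) ≤
      Real.log (a + ∫ x in r..R, q x) - Real.log a := by
  set B : ℝ → ℝ := fun s => ∫ x in s..R, q x with hBdef
  have hsub : ∀ s t : ℝ, s ∈ Set.Icc r R → t ∈ Set.Icc r R → Set.uIcc s t ⊆ Set.Icc r R :=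
    fun s t hs ht => Set.uIcc_subset_Icc hs ht
  have hqint : ∀ s t : ℝ, s ∈ Set.Icc r R → t ∈ Set.Icc r R → IntervalIntegrable q volume s t :=
    fun s t hs ht => (hqi.mono_set (hsub s t hs ht)).intervalIntegrable
  have hRmem : R ∈ Set.Icc r R := Set.right_mem_Icc.mpr hrR
  have hrmem : r ∈ Set.Icc r R := Set.left_mem_Icc.mpr hrR
  have hBadd : ∀ s t : ℝ, s ∈ Set.Icc r R → t ∈ Set.Icc r R →
      (∫ x in s..t, q x) + B t = B s := fun s t hs ht =>
    intervalIntegral.integral_add_adjacent_intervals (hqint s t hs ht) (hqint t R ht hRmem)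
  have hB0 : ∀ s ∈ Set.Icc r R, 0 ≤ B s := by
    intro s hs
    apply intervalIntegral.integral_nonneg hs.2
    intro x hx; exact hq0 x ⟨le_trans hs.1 hx.1, hx.2⟩
  have hBanti : ∀ s t : ℝ, s ∈ Set.Icc r R → t ∈ Set.Icc r R → s ≤ t → B t ≤ B s := by
    intro s t hs ht hst
    have h1 : 0 ≤ ∫ x in s..t, q x :=
      intervalIntegral.integral_nonneg hst
        (fun x hx => hq0 x ⟨le_trans hs.1 hx.1, le_trans hx.2 ht.2⟩)
    linarith [hBadd s t hs ht]
  have hIccEq : Set.uIcc r R = Set.Icc r R := Set.uIcc_of_le hrR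
  have hBcont : ContinuousOn B (Set.Icc r R) := by
    have h := intervalIntegral.continuousOn_primitive_interval_left
      (f := q) (μ := volume) (a := r) (b := R) (by rwa [hIccEq])
    rwa [hIccEq] at h
  have hBpos : ∀ s ∈ Set.Icc r R, 0 < a + B s := fun s hs => by linarith [hB0 s hs]
  have hgint : ∀ s t : ℝ, s ∈ Set.Icc r R → t ∈ Set.Icc r R →
      IntervalIntegrable (fun η => q η / (a + B η)) volume s t :=
    fun s t hs ht => (hgi.mono_set (hsub s t hs ht)).intervalIntegrable
  -- main induction
  have main : ∀ δ : ℝ, 0 < δ → ∀ k : ℕ, ∀ s, s ∈ Set.Icc r R → B s ≤ (k : ℝ) * δ →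
      (∫ η in s..R, q η / (a + B η)) ≤
        (Real.log (a + B s) - Real.log a) + δ * B s / a ^ 2 := by
    intro δ hδ k
    induction k with
    | zero =>
      intro s hs hBs
      push_cast at hBs
      have hBs0 : B s = 0 := le_antisymm (by linarith) (hB0 s hs)
      have hle : (∫ η in s..R, q η / (a + B η)) ≤ ∫ η in s..R, q η / a := by
        apply intervalIntegral.integral_mono_on hs.2 (hgint s R hs hRmem)
          ((hqint s R hs hRmem).div_const a)
        intro x hx
        have hx' : x ∈ Set.Icc r R := ⟨le_trans hs.1 hx.1, hx.2⟩
        gcongr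
        · exact hq0 x hx'
        · linarith [hB0 x hx']
      have heq : (∫ η in s..R, q η / a) = B s / a := by
        rw [intervalIntegral.integral_div]
      rw [hBs0] at heq
      simp only [zero_div] at heq
      rw [hBs0]
      simp only [add_zero, sub_self, mul_zero, zero_div]
      linarith
    | succ k ih =>
      intro s hs hBs
      push_cast at hBs
      by_cases hk : B s ≤ (k : ℝ) * δ
      · exact ih s hs hk
      · push_neg at hk
        have hkδ0 : (0:ℝ) ≤ (k : ℝ) * δ := by positivity
        have hBR : B R = 0 := intervalIntegral.integral_same
        obtain ⟨t, ht, hBt⟩ : ∃ t ∈ Set.Icc s R, B t = (k : ℝ) * δ := by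
          have hmem : (k:ℝ) * δ ∈ Set.Icc (B R) (B s) := by
            rw [hBR]; exact ⟨hkδ0, hk.le⟩
          have h := intermediate_value_Icc' hs.2
            (hBcont.mono (Set.Icc_subset_Icc hs.1 le_rfl)) hmem
          obtain ⟨t, ht, hBt⟩ := h; exact ⟨t, ht, hBt⟩
        have ht' : t ∈ Set.Icc r R := ⟨le_trans hs.1 ht.1, ht.2⟩
        have hsplit := intervalIntegral.integral_add_adjacent_intervals
          (hgint s t hs ht') (hgint t R ht' hRmem)
        set d := B s - B t with hd
        have hd0 : 0 ≤ d := by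
          have := hBanti s t hs ht' ht.1
          simp only [hd]; linarith
        have hdδ : d ≤ δ := by simp only [hd, hBt]; linarith
        have hct : 0 < a + B t := hBpos t ht'
        have hmid : (∫ η in s..t, q η / (a + B η)) ≤ d / (a + B t) := by
          have h1 : (∫ η in s..t, q η / (a + B η)) ≤ ∫ η in s..t, q η / (a + B t) := by
            apply intervalIntegral.integral_mono_on ht.1 (hgint s t hs ht')
              ((hqint s t hs ht').div_const _)
            intro x hx
            have hx' : x ∈ Set.Icc r R := ⟨le_trans hs.1 hx.1, le_trans hx.2 ht'.2⟩
            have hBx := hBanti x t hx' ht' hx.2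
            gcongr
            exact hq0 x hx'
          have h2 : (∫ η in s..t, q η / (a + B t)) = d / (a + B t) := by
            rw [intervalIntegral.integral_div]
            congr 1
            have := hBadd s t hs ht'
            simp only [hd]; linarith
          linarith
        have hlog : d / (a + B t) ≤
            Real.log (a + B s) - Real.log (a + B t) + (d / (a + B t)) ^ 2 := by
          have h := log_step hct hd0
          have he : a + B t + d = a + B s := by simp only [hd]; ring
          rwa [he] at h
        have herr : (d / (a + B t)) ^ 2 ≤ δ * d / a ^ 2 := by
          have h1 : d / (a + B t) ≤ d / a := by
            gcongr
            linarith [hB0 t ht']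
          have h2 : (d / (a + B t)) ^ 2 ≤ (d / a) ^ 2 := by
            apply pow_le_pow_left₀ (by positivity) h1
          have h3 : (d / a) ^ 2 ≤ δ * d / a ^ 2 := by
            rw [div_pow]
            apply div_le_div_of_nonneg_right _ (by positivity)
            nlinarith
          linarith
        have hih := ih t ht' (le_of_eq hBt)
        have hsum : δ * d / a ^ 2 + δ * B t / a ^ 2 = δ * B s / a ^ 2 := by
          simp only [hd]; ring
        linarith
  -- conclusion from the induction
  have hBr0 : 0 ≤ B r := hB0 r hrmem
  have habs : (∫ η in r..R, q η / (a + B η)) ≤ Real.log (a + B r) - Real.log a := by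
    apply le_of_forall_pos_le_add
    intro ε hε
    have hδ : 0 < ε * a ^ 2 / (B r + 1) := by positivity
    set δ := ε * a ^ 2 / (B r + 1) with hδdef
    set k := ⌈B r / δ⌉₊ with hkdef
    have hk : B r ≤ (k : ℝ) * δ := by
      have h1 : B r / δ ≤ (k : ℝ) := Nat.le_ceil _
      calc B r = B r / δ * δ := by field_simp
        _ ≤ (k : ℝ) * δ := mul_le_mul_of_nonneg_right h1 hδ.le
    have h := main δ hδ k r hrmem hk
    have herr : δ * B r / a ^ 2 ≤ ε := by
      have he : δ * B r / a ^ 2 = ε * (B r / (B r + 1)) := by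
        rw [hδdef]; field_simp
      rw [he]
      have : B r / (B r + 1) ≤ 1 := by
        rw [div_le_one (by linarith)]; linarith
      nlinarith
    linarith
  exact habs

theorem monotonicity_lemma
    (M R₁ : ℝ) (hM : 0 < 2 * M) (hMR : 2 * M ≤ R₁)
    (ρ : ℝ → ℝ) (hρ : ∀ r ∈ Set.Icc (2 * M) R₁, 0 ≤ ρ r)
    (hρint : IntegrableOn ρ (Set.Icc (2 * M) R₁))
    (m e2lam : ℝ → ℝ)
    (hm : ∀ r, m r = M - ∫ η in r..R₁, 4 * π * η ^ 2 * ρ η)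
    (hmr : ∀ r ∈ Set.Icc (2 * M) R₁, 0 ≤ 2 * m r / r ∧ 2 * m r / r < 1)
    (he2lam : ∀ r, e2lam r = (1 - 2 * m r / r)⁻¹)
    (hint : IntegrableOn (fun η => 4 * π * η * ρ η * e2lam η) (Set.Icc (2 * M) R₁)) :
    ∀ r ∈ Set.Icc (2 * M) R₁,
      Real.exp (-2 * ∫ η in r..R₁, 4 * π * η * ρ η * e2lam η) ≥
        (r - 2 * M) / (r - 2 * m r) := by
  have hπ := Real.pi_pos
  set q : ℝ → ℝ := fun η => 8 * π * η ^ 2 * ρ η with hqdef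
  have hq0 : ∀ x ∈ Set.Icc (2 * M) R₁, 0 ≤ q x := by
    intro x hx
    have := hρ x hx
    simp only [hqdef]
    positivity
  have hqi : IntegrableOn q (Set.Icc (2 * M) R₁) := by
    have hc : ContinuousOn (fun η : ℝ => 8 * π * η ^ 2) (Set.Icc (2 * M) R₁) := by
      fun_prop
    simpa only [hqdef] using
      (IntegrableOn.continuousOn_mul hc hρint isCompact_Icc)
  -- the identity `s - 2 m s = (s - 2M) + ∫_s^{R₁} q`
  have hmid : ∀ s : ℝ, s - 2 * m s = (s - 2 * M) + ∫ x in s..R₁, q x := by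
    intro s
    have h2 : (∫ x in s..R₁, q x) = 2 * ∫ η in s..R₁, 4 * π * η ^ 2 * ρ η := by
      rw [← intervalIntegral.integral_const_mul]
      apply intervalIntegral.integral_congr
      intro x _
      simp only [hqdef]; ring
    rw [hm s, h2]; ring
  have hden : ∀ η ∈ Set.Icc (2 * M) R₁, 0 < η - 2 * m η := by
    intro η hη
    have hη0 : 0 < η := lt_of_lt_of_le hM hη.1
    have h := (hmr η hη).2
    have := (div_lt_one hη0).mp h
    linarith
  have he2 : ∀ η ∈ Set.Icc (2 * M) R₁, e2lam η = η / (η - 2 * m η) := by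
    intro η hη
    have hη0 : 0 < η := lt_of_lt_of_le hM hη.1
    rw [he2lam η,
      show (1 - 2 * m η / η) = (η - 2 * m η) / η by field_simp,
      inv_div]
  intro r hr
  have hr0 : 0 < r := lt_of_lt_of_le hM hr.1
  rcases eq_or_lt_of_le hr.1 with heq | hlt
  · rw [ge_iff_le, ← heq, sub_self, zero_div]
    exact (Real.exp_pos _).le
  · have ha : 0 < r - 2 * M := by linarith
    have hsub' : Set.Icc r R₁ ⊆ Set.Icc (2 * M) R₁ := Set.Icc_subset_Icc hr.1 le_rfl
    have hq0' : ∀ x ∈ Set.Icc r R₁, 0 ≤ q x := fun x hx => hq0 x (hsub' hx)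
    have hqi' : IntegrableOn q (Set.Icc r R₁) := hqi.mono_set hsub'
    have hB0' : ∀ η ∈ Set.Icc r R₁, 0 ≤ ∫ x in η..R₁, q x := by
      intro η hη
      apply intervalIntegral.integral_nonneg hη.2
      intro x hx
      exact hq0' x ⟨le_trans hη.1 hx.1, hx.2⟩
    have hBpos' : ∀ η ∈ Set.Icc r R₁, 0 < (r - 2 * M) + ∫ x in η..R₁, q x := by
      intro η hη; linarith [hB0' η hη]
    have hIccEq : Set.uIcc r R₁ = Set.Icc r R₁ := Set.uIcc_of_le hr.2
    have hBcont : ContinuousOn (fun s => ∫ x in s..R₁, q x) (Set.Icc r R₁) := by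
      have h := intervalIntegral.continuousOn_primitive_interval_left
        (f := q) (μ := volume) (a := r) (b := R₁) (by rwa [hIccEq])
      rwa [hIccEq] at h
    have hgi : IntegrableOn (fun η => q η / ((r - 2 * M) + ∫ x in η..R₁, q x)) (Set.Icc r R₁) := by
      have hc : ContinuousOn (fun η => ((r - 2 * M) + ∫ x in η..R₁, q x)⁻¹) (Set.Icc r R₁) :=
        (continuousOn_const.add hBcont).inv₀ (fun s hs => ne_of_gt (hBpos' s hs))
      have h := hqi'.mul_continuousOn hc isCompact_Icc
      simpa only [div_eq_mul_inv] using h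
    have hkey := key_log_bound (r - 2 * M) r R₁ ha hr.2 q hq0' hqi' hgi
    -- compare the integrands
    have hX : (∫ η in r..R₁, 2 * (4 * π * η * ρ η * e2lam η)) ≤
        ∫ η in r..R₁, q η / ((r - 2 * M) + ∫ x in η..R₁, q x) := by
      apply intervalIntegral.integral_mono_on hr.2
      · have h' : IntegrableOn (fun η => 4 * π * η * ρ η * e2lam η) (Set.uIcc r R₁) := by
          rw [hIccEq]; exact hint.mono_set hsub'
        exact h'.intervalIntegrable.const_mul 2
      · have h' : IntegrableOn (fun η => q η / ((r - 2 * M) + ∫ x in η..R₁, q x))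
            (Set.uIcc r R₁) := by
          rw [hIccEq]; exact hgi
        exact h'.intervalIntegrable
      · intro x hx
        have hx' : x ∈ Set.Icc (2 * M) R₁ := hsub' hx
        have hx0 : 0 < x := lt_of_lt_of_le hM hx'.1
        have hdx : 0 < x - 2 * m x := hden x hx'
        have heq1 : 2 * (4 * π * x * ρ x * e2lam x) = q x / (x - 2 * m x) := by
          rw [he2 x hx']
          simp only [hqdef]
          field_simp
          ring
        have hle2 : (r - 2 * M) + (∫ u in x..R₁, q u) ≤ x - 2 * m x := by
          have h := hmid x
          have hxr : r ≤ x := hx.1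
          linarith
        have hbx : 0 < (r - 2 * M) + ∫ u in x..R₁, q u := hBpos' x hx
        rw [heq1]
        gcongr
        exact hq0 x hx'
    have h2X : 2 * (∫ η in r..R₁, 4 * π * η * ρ η * e2lam η) ≤
        Real.log ((r - 2 * M) + ∫ x in r..R₁, q x) - Real.log (r - 2 * M) := by
      have he : (∫ η in r..R₁, 2 * (4 * π * η * ρ η * e2lam η)) =
          2 * ∫ η in r..R₁, 4 * π * η * ρ η * e2lam η :=
        intervalIntegral.integral_const_mul 2 _
      calc 2 * (∫ η in r..R₁, 4 * π * η * ρ η * e2lam η)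
          = ∫ η in r..R₁, 2 * (4 * π * η * ρ η * e2lam η) := he.symm
        _ ≤ ∫ η in r..R₁, q η / ((r - 2 * M) + ∫ x in η..R₁, q x) := hX
        _ ≤ Real.log ((r - 2 * M) + ∫ x in r..R₁, q x) - Real.log (r - 2 * M) := hkey
    rw [ge_iff_le]
    have hrd : 0 < r - 2 * m r := hden r hr
    have hrB : r - 2 * m r = (r - 2 * M) + ∫ x in r..R₁, q x := by
      have h := hmid r; linarith
    have hpos : 0 < (r - 2 * M) / (r - 2 * m r) := div_pos (by linarith) hrd
    have hlog : Real.log ((r - 2 * M) / (r - 2 * m r)) ≤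
        -2 * ∫ η in r..R₁, 4 * π * η * ρ η * e2lam η := by
      rw [Real.log_div (ne_of_gt ha) (ne_of_gt hrd), hrB]
      linarith
    calc (r - 2 * M) / (r - 2 * m r)
        = Real.exp (Real.log ((r - 2 * M) / (r - 2 * m r))) := (Real.exp_log hpos).symm
      _ ≤ Real.exp (-2 * ∫ η in r..R₁, 4 * π * η * ρ η * e2lam η) :=
          Real.exp_le_exp.mpr hlog
end

section
/- Let M > 0, R₁ > 2M, B, C, κ > 0 with BC ≥ 1 - 2M/R(0) + κ for the initial value R(0) ∈ (2M, R₁]. Let R : [0,T) → (2M, R₁] be differentiable satisfying 1/R(t) ≥ 1/R(0) + (BC/(2M))(1 - e^{-2Mt/R₁²}) for all t while R(t) ≥ 2M. Then R(t) < (2M/(1+κ))·(1 - e^{-2Mt/R₁²})⁻¹, and consequently there exists t* > 0, depending only on M, R₁, κ, such that R(t*) ≤ 2M. -/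
open Real

theorem crossing_estimate
    (M R₁ κ : ℝ) (hM : 0 < M) (hR₁ : 2 * M < R₁) (hκ : 0 < κ) :
    ∃ tstar > 0, ∀ (B C T : ℝ) (R : ℝ → ℝ),
      0 < B → 0 < C → 0 < T → Differentiable ℝ R →
      (∀ t ∈ Set.Ico (0:ℝ) T, R t ∈ Set.Ioc (2 * M) R₁) →
      B * C ≥ 1 - 2 * M / R 0 + κ →
      (∀ t ∈ Set.Ico (0:ℝ) T,
        1 / R t ≥ 1 / R 0 + (B * C / (2 * M)) * (1 - Real.exp (-2 * M * t / R₁ ^ 2))) →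
      (∀ t ∈ Set.Ioo (0:ℝ) T,
        R t < (2 * M / (1 + κ)) * (1 - Real.exp (-2 * M * t / R₁ ^ 2))⁻¹) ∧
      T ≤ tstar := by
  have hR₁0 : 0 < R₁ := lt_trans (by linarith) hR₁
  have hlog : 0 < Real.log ((1 + κ) / κ) :=
    Real.log_pos (by rw [lt_div_iff₀ hκ]; linarith)
  refine ⟨R₁ ^ 2 / (2 * M) * Real.log ((1 + κ) / κ), by positivity, ?_⟩
  intro B C T R hB hC hT hdiff hrange hBC hineq
  have key : ∀ t ∈ Set.Ioo (0:ℝ) T,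
      R t < (2 * M / (1 + κ)) * (1 - Real.exp (-2 * M * t / R₁ ^ 2))⁻¹ := by
    intro t ht
    set E := Real.exp (-2 * M * t / R₁ ^ 2) with hE
    have hEpos : 0 < E := Real.exp_pos _
    have hE1 : E < 1 := by
      rw [hE, Real.exp_lt_one_iff]
      apply div_neg_of_neg_of_pos
      · nlinarith [ht.1]
      · positivity
    have hR0 : R 0 ∈ Set.Ioc (2 * M) R₁ := hrange 0 ⟨le_refl _, hT⟩
    have hRt : R t ∈ Set.Ioc (2 * M) R₁ := hrange t ⟨le_of_lt ht.1, ht.2⟩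
    have hR0pos : 0 < R 0 := lt_trans (by linarith) hR0.1
    have hRtpos : 0 < R t := lt_trans (by linarith) hRt.1
    have h1 : 1 / R t ≥ 1 / R 0 + (B * C / (2 * M)) * (1 - E) :=
      hineq t ⟨le_of_lt ht.1, ht.2⟩
    have h2 : (B * C / (2 * M)) * (1 - E) ≥
        ((1 - 2 * M / R 0 + κ) / (2 * M)) * (1 - E) := by
      apply mul_le_mul_of_nonneg_right _ (by linarith)
      exact div_le_div_of_nonneg_right hBC (by linarith)
    have h3 : 1 / R 0 + ((1 - 2 * M / R 0 + κ) / (2 * M)) * (1 - E)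
        = E / R 0 + (1 + κ) * (1 - E) / (2 * M) := by
      field_simp
      ring
    have h4 : 1 / R t > (1 + κ) * (1 - E) / (2 * M) := by
      have : E / R 0 > 0 := by positivity
      linarith [h1, h2, h3 ▸ (add_le_add_right h2 (1 / R 0))]
    -- from 1/R t > c > 0 and R t > 0 deduce R t < 1/c
    have hc : 0 < (1 + κ) * (1 - E) / (2 * M) := by
      have : 0 < 1 - E := by linarith
      positivity
    have h5 : (1 + κ) * (1 - E) / (2 * M) * R t < 1 := by
      have := mul_lt_mul_of_pos_right h4 hRtpos
      rwa [one_div, inv_mul_cancel₀ (ne_of_gt hRtpos)] at this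
    have h6 : R t < ((1 + κ) * (1 - E) / (2 * M))⁻¹ := by
      rw [← one_div]
      rw [lt_div_iff₀ hc]
      linarith [h5]
    have h7 : ((1 + κ) * (1 - E) / (2 * M))⁻¹ = (2 * M / (1 + κ)) * (1 - E)⁻¹ := by
      have hE' : (1 - E) ≠ 0 := by linarith
      field_simp
    rw [h7] at h6
    exact h6
  refine ⟨key, ?_⟩
  by_contra h
  push_neg at h
  set ts := R₁ ^ 2 / (2 * M) * Real.log ((1 + κ) / κ) with hts
  have hts0 : 0 < ts := by positivity
  have hmem : ts ∈ Set.Ioo (0:ℝ) T := ⟨hts0, h⟩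
  have hbound := key ts hmem
  have hexp : Real.exp (-2 * M * ts / R₁ ^ 2) = κ / (1 + κ) := by
    have harg : -2 * M * ts / R₁ ^ 2 = - Real.log ((1 + κ) / κ) := by
      rw [hts]; field_simp
    rw [harg, Real.exp_neg, Real.exp_log (by positivity)]
    rw [inv_div]
  rw [hexp] at hbound
  have h1E : (1 : ℝ) - κ / (1 + κ) = 1 / (1 + κ) := by
    field_simp; ring
  rw [h1E] at hbound
  have : (2 * M / (1 + κ)) * (1 / (1 + κ))⁻¹ = 2 * M := by
    rw [one_div, inv_inv]
    field_simp
  rw [this] at hbound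
  have := (hrange ts ⟨le_of_lt hts0, h⟩).1
  linarith
end

section
/- Let R : [0,∞) → (0,∞) be differentiable and satisfy Ṙ(s) ≤ -B·C·exp(-2∫₀ˢ M/R²(τ) dτ) for constants B, C, M > 0 and with R(s) ≤ R₁ for all s. Then for all t ≥ 0, 1/R(t) ≥ 1/R(0) + (BC/(2M))(1 - exp(-2∫₀ᵗ M/R²(s) ds)) ≥ 1/R(0) + (BC/(2M))(1 - e^{-2Mt/R₁²}). -/
open Real MeasureTheory intervalIntegral

theorem ode_comparison_estimate
    (B C M R₁ : ℝ) (hB : 0 < B) (hC : 0 < C) (hM : 0 < M) (hR₁ : 0 < R₁)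
    (R R' : ℝ → ℝ)
    (hRpos : ∀ s : ℝ, 0 ≤ s → 0 < R s)
    (hRle : ∀ s : ℝ, 0 ≤ s → R s ≤ R₁)
    (hRderiv : ∀ s : ℝ, 0 ≤ s → HasDerivAt R (R' s) s)
    (hR' : ∀ s : ℝ, 0 ≤ s →
      R' s ≤ -B * C * Real.exp (-2 * ∫ τ in (0:ℝ)..s, M / R τ ^ 2)) :
    ∀ t : ℝ, 0 ≤ t →
      1 / R t ≥ 1 / R 0 +
        (B * C / (2 * M)) * (1 - Real.exp (-2 * ∫ s in (0:ℝ)..t, M / R s ^ 2)) ∧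
      1 / R 0 + (B * C / (2 * M)) * (1 - Real.exp (-2 * ∫ s in (0:ℝ)..t, M / R s ^ 2)) ≥
        1 / R 0 + (B * C / (2 * M)) * (1 - Real.exp (-2 * M * t / R₁ ^ 2)) := by
  -- the modified integrand, continuous on all of ℝ
  set f : ℝ → ℝ := fun τ => M / R |τ| ^ 2 with hf_def
  have hRcont : ∀ s : ℝ, 0 ≤ s → ContinuousAt R s := fun s hs =>
    (hRderiv s hs).continuousAt
  have hfcont : Continuous f := by
    rw [continuous_iff_continuousAt]
    intro x
    have h1 : ContinuousAt (fun τ : ℝ => R |τ|) x :=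
      (hRcont |x| (abs_nonneg x)).comp continuous_abs.continuousAt
    exact continuousAt_const.div (h1.pow 2)
      (pow_ne_zero 2 (hRpos |x| (abs_nonneg x)).ne')
  -- agreement of the two integrals for s ≥ 0
  have hIcongr : ∀ s : ℝ, 0 ≤ s →
      (∫ τ in (0:ℝ)..s, M / R τ ^ 2) = ∫ τ in (0:ℝ)..s, f τ := by
    intro s hs
    refine intervalIntegral.integral_congr ?_
    intro τ hτ
    rw [Set.uIcc_of_le hs] at hτ
    simp only [hf_def, abs_of_nonneg hτ.1]
  set F : ℝ → ℝ := fun s => ∫ τ in (0:ℝ)..s, f τ with hF_def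
  have hFderiv : ∀ s : ℝ, HasDerivAt F (f s) s := by
    intro s
    exact intervalIntegral.integral_hasDerivAt_right
      (hfcont.intervalIntegrable 0 s)
      hfcont.aestronglyMeasurable.stronglyMeasurableAtFilter
      hfcont.continuousAt
  have hfval : ∀ s : ℝ, 0 ≤ s → f s = M / R s ^ 2 := by
    intro s hs; simp [hf_def, abs_of_nonneg hs]
  set c : ℝ := B * C / (2 * M) with hc_def
  have hc_pos : 0 < c := by positivity
  set G : ℝ → ℝ := fun s => 1 / R s + c * Real.exp (-2 * F s) with hG_def
  -- derivative of G at points s ≥ 0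
  have hGderiv : ∀ s : ℝ, 0 ≤ s →
      HasDerivAt G (-R' s / R s ^ 2 + c * (Real.exp (-2 * F s) * (-2 * f s))) s := by
    intro s hs
    have h1 : HasDerivAt (fun u => 1 / R u) (-R' s / R s ^ 2) s := by
      simp only [one_div]; exact (hRderiv s hs).inv (hRpos s hs).ne'
    have h2 : HasDerivAt (fun u => -2 * F u) (-2 * f s) s := (hFderiv s).const_mul (-2)
    have h3 : HasDerivAt (fun u => Real.exp (-2 * F u)) (Real.exp (-2 * F s) * (-2 * f s)) s :=
      h2.exp
    exact h1.add (h3.const_mul c)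
  have hGderiv_nonneg : ∀ s : ℝ, 0 < s → 0 ≤ deriv G s := by
    intro s hs
    rw [(hGderiv s hs.le).deriv]
    have hfv := hfval s hs.le
    have hRs := hRpos s hs.le
    have hexp : (0:ℝ) < Real.exp (-2 * F s) := Real.exp_pos _
    have hR'le : R' s ≤ -B * C * Real.exp (-2 * F s) := by
      have := hR' s hs.le
      rwa [hIcongr s hs.le] at this
    have key : c * (Real.exp (-2 * F s) * (-2 * f s))
        = -(B * C * Real.exp (-2 * F s)) / R s ^ 2 := by
      rw [hfv, hc_def]
      field_simp
    rw [key]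
    have h4 : B * C * Real.exp (-2 * F s) ≤ -R' s := by linarith
    have h5 : (0:ℝ) < R s ^ 2 := by positivity
    rw [← add_div, le_div_iff₀ h5]
    linarith
  -- G is monotone on [0, ∞)
  have hGcont : ContinuousOn G (Set.Ici 0) := by
    intro s hs
    exact ((hGderiv s hs).continuousAt).continuousWithinAt
  have hGmono : MonotoneOn G (Set.Ici (0:ℝ)) := by
    apply monotoneOn_of_deriv_nonneg (convex_Ici 0) hGcont
    · intro s hs
      rw [interior_Ici] at hs
      exact ((hGderiv s (le_of_lt hs)).differentiableAt).differentiableWithinAt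
    · intro s hs
      rw [interior_Ici] at hs
      exact hGderiv_nonneg s hs
  intro t ht
  have hGle : G 0 ≤ G t := hGmono Set.self_mem_Ici ht ht
  have hF0 : F 0 = 0 := intervalIntegral.integral_same
  constructor
  · rw [hIcongr t ht, ge_iff_le]
    have : G 0 = 1 / R 0 + c := by simp [hG_def, hF0]
    rw [this, hG_def] at hGle
    simp only at hGle
    linarith [hGle]
  · -- second inequality: ∫ ≥ M t / R₁ ^ 2
    rw [hIcongr t ht]
    have hint : M * t / R₁ ^ 2 ≤ F t := by
      have hconst : (∫ τ in (0:ℝ)..t, M / R₁ ^ 2) = M / R₁ ^ 2 * t := by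
        simp [smul_eq_mul]; ring
      have hmono : (∫ τ in (0:ℝ)..t, M / R₁ ^ 2) ≤ ∫ τ in (0:ℝ)..t, f τ := by
        apply intervalIntegral.integral_mono_on ht
          (intervalIntegrable_const) (hfcont.intervalIntegrable 0 t)
        intro τ hτ
        rw [hfval τ hτ.1]
        have h1 : 0 < R τ := hRpos τ hτ.1
        have h2 : R τ ≤ R₁ := hRle τ hτ.1
        apply div_le_div_of_nonneg_left hM.le (by positivity)
        exact pow_le_pow_left₀ h1.le h2 2
      rw [hconst] at hmono
      calc M * t / R₁ ^ 2 = M / R₁ ^ 2 * t := by ring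
        _ ≤ F t := hmono
    have hexp_le : Real.exp (-2 * F t) ≤ Real.exp (-2 * M * t / R₁ ^ 2) := by
      apply Real.exp_le_exp.mpr
      have : -2 * M * t / R₁ ^ 2 = -2 * (M * t / R₁ ^ 2) := by ring
      rw [this]
      nlinarith [hint]
    have : 1 - Real.exp (-2 * M * t / R₁ ^ 2) ≤ 1 - Real.exp (-2 * F t) := by linarith
    have := mul_le_mul_of_nonneg_left this hc_pos.le
    linarith
end

section
/- Let m : [0,T] × [0,∞) → ℝ be C¹ with ∂m/∂t(t,r) = -4πr² e^{(μ-λ)(t,r)} j(t,r) and ∂m/∂r(t,r) = 4πr²ρ(t,r), and let α : [0,T] → (0,∞) solve α̇ = ((j - δ)/(ρ + δ))·e^{(μ-λ)(t,α)} with δ > 0, j ≤ 0, ρ ≥ 0, α ≤ R₁, and e^{μ-λ} ≤ 1. Then (d/dt) m(t,α(t)) ≥ -4πR₁²δ, and hence m(t,α(t)) ≥ m(0,α(0)) - 4πR₁²δ·t for all t ∈ [0,T]. -/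
open Real

theorem mass_transport_estimate
    (T R₁ δ : ℝ) (hT : 0 < T) (hR₁ : 0 < R₁) (hδ : 0 < δ)
    (m mulam ρ j : ℝ → ℝ → ℝ) (α : ℝ → ℝ)
    (hmC1 : ContDiff ℝ 1 (fun q : ℝ × ℝ => m q.1 q.2))
    (hmt : ∀ t r : ℝ, HasDerivAt (fun s => m s r)
      (-4 * π * r ^ 2 * Real.exp (mulam t r) * j t r) t)
    (hmr : ∀ t r : ℝ, HasDerivAt (fun u => m t u) (4 * π * r ^ 2 * ρ t r) r)
    (hj : ∀ t r, j t r ≤ 0) (hρ : ∀ t r, 0 ≤ ρ t r)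
    (hmulam : ∀ t r, Real.exp (mulam t r) ≤ 1)
    (hαpos : ∀ t ∈ Set.Icc (0:ℝ) T, 0 < α t)
    (hαle : ∀ t ∈ Set.Icc (0:ℝ) T, α t ≤ R₁)
    (hα : ∀ t ∈ Set.Icc (0:ℝ) T, HasDerivAt α
      ((j t (α t) - δ) / (ρ t (α t) + δ) * Real.exp (mulam t (α t))) t) :
    (∀ t ∈ Set.Icc (0:ℝ) T, ∃ d : ℝ,
      HasDerivAt (fun s => m s (α s)) d t ∧ d ≥ -(4 * π * R₁ ^ 2 * δ)) ∧
    (∀ t ∈ Set.Icc (0:ℝ) T, m t (α t) ≥ m 0 (α 0) - 4 * π * R₁ ^ 2 * δ * t) := by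
  have main : ∀ t ∈ Set.Icc (0:ℝ) T, ∃ d : ℝ,
      HasDerivAt (fun s => m s (α s)) d t ∧ d ≥ -(4 * π * R₁ ^ 2 * δ) := by
    intro t ht
    set r := α t with hr
    set a := (j t r - δ) / (ρ t r + δ) * Real.exp (mulam t r) with ha
    set L := fderiv ℝ (fun q : ℝ × ℝ => m q.1 q.2) (t, r) with hL
    have hdiff : DifferentiableAt ℝ (fun q : ℝ × ℝ => m q.1 q.2) (t, r) :=
      (hmC1.differentiable one_ne_zero).differentiableAt
    have hF : HasFDerivAt (fun q : ℝ × ℝ => m q.1 q.2) L (t, r) := hdiff.hasFDerivAt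
    -- partial derivatives
    have hγ1 : HasDerivAt (fun s : ℝ => (s, r)) ((1 : ℝ), (0 : ℝ)) t :=
      (hasDerivAt_id t).prodMk (hasDerivAt_const t r)
    have hγ2 : HasDerivAt (fun u : ℝ => (t, u)) ((0 : ℝ), (1 : ℝ)) r :=
      (hasDerivAt_const r t).prodMk (hasDerivAt_id r)
    have hL1 : HasDerivAt (fun s => m s r) (L (1, 0)) t := by
      have h := hF.comp_hasDerivAt t hγ1; exact h
    have hL2 : HasDerivAt (fun u => m t u) (L (0, 1)) r := hF.comp_hasDerivAt r hγ2
    have e1 : L (1, 0) = -4 * π * r ^ 2 * Real.exp (mulam t r) * j t r :=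
      hL1.unique (hmt t r)
    have e2 : L (0, 1) = 4 * π * r ^ 2 * ρ t r := hL2.unique (hmr t r)
    -- chain rule
    have hγ : HasDerivAt (fun s : ℝ => (s, α s)) ((1 : ℝ), a) t :=
      (hasDerivAt_id t).prodMk (hα t ht)
    have hcomp : HasDerivAt (fun s => m s (α s)) (L (1, a)) t := by
      have h := hF.comp_hasDerivAt t hγ; exact h
    have hsplit : L (1, a) = L (1, 0) + a * L (0, 1) := by
      have : ((1 : ℝ), a) = (1, 0) + a • ((0 : ℝ), (1 : ℝ)) := by
        simp [Prod.ext_iff]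
      rw [this, map_add, map_smul]
      simp
    refine ⟨L (1, a), hcomp, ?_⟩
    rw [hsplit, e1, e2]
    set P := ρ t r with hP
    set J := j t r with hJ
    set E := Real.exp (mulam t r) with hE
    have hPd : 0 < P + δ := by have := hρ t r; linarith
    have hJ0 : J ≤ 0 := hj t r
    have hE0 : 0 < E := Real.exp_pos _
    have hE1 : E ≤ 1 := hmulam t r
    have hr0 : 0 < r := hαpos t ht
    have hrR : r ≤ R₁ := hαle t ht
    have key : -δ ≤ P * (J - δ) / (P + δ) - J := by
      rw [le_sub_iff_add_le, le_div_iff₀ hPd]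
      nlinarith
    have heq : -4 * π * r ^ 2 * E * J + a * (4 * π * r ^ 2 * P)
        = 4 * π * r ^ 2 * E * (P * (J - δ) / (P + δ) - J) := by
      rw [ha]
      field_simp
      ring
    rw [ge_iff_le, heq]
    have hpos : 0 ≤ 4 * π * r ^ 2 * E := by positivity
    have step1 : 4 * π * r ^ 2 * E * (-δ) ≤ 4 * π * r ^ 2 * E * (P * (J - δ) / (P + δ) - J) :=
      mul_le_mul_of_nonneg_left key hpos
    have step2 : -(4 * π * R₁ ^ 2 * δ) ≤ 4 * π * r ^ 2 * E * (-δ) := by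
      have hr2 : r ^ 2 ≤ R₁ ^ 2 := by nlinarith
      have h2 : r ^ 2 * E ≤ r ^ 2 := mul_le_of_le_one_right (sq_nonneg r) hE1
      have h3 : r ^ 2 * E ≤ R₁ ^ 2 := h2.trans hr2
      have h4 : 4 * π * (r ^ 2 * E) ≤ 4 * π * R₁ ^ 2 :=
        mul_le_mul_of_nonneg_left h3 (by positivity)
      have h5 : 4 * π * (r ^ 2 * E) * δ ≤ 4 * π * R₁ ^ 2 * δ :=
        mul_le_mul_of_nonneg_right h4 hδ.le
      have h6 : 4 * π * r ^ 2 * E * (-δ) = -(4 * π * (r ^ 2 * E) * δ) := by ring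
      linarith
    linarith
  refine ⟨main, ?_⟩
  intro t ht
  set C := 4 * π * R₁ ^ 2 * δ with hC
  set g := fun s : ℝ => m s (α s) + C * s with hg
  have hmono : MonotoneOn g (Set.Icc 0 T) := by
    apply monotoneOn_of_deriv_nonneg (convex_Icc 0 T)
    · apply continuousOn_of_forall_continuousAt
      intro x hx
      obtain ⟨d, hd, _⟩ := main x hx
      exact (hd.continuousAt.add (continuous_const.mul continuous_id).continuousAt)
    · intro x hx
      rw [interior_Icc] at hx
      obtain ⟨d, hd, _⟩ := main x (Set.mem_Icc_of_Ioo hx)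
      have : HasDerivAt g (d + C) x := by
        have h1 := hd.add ((hasDerivAt_id x).const_mul C)
        rw [mul_one] at h1
        exact h1
      exact this.differentiableAt.differentiableWithinAt
    · intro x hx
      rw [interior_Icc] at hx
      obtain ⟨d, hd, hdge⟩ := main x (Set.mem_Icc_of_Ioo hx)
      have hgd : HasDerivAt g (d + C) x := by
        have h1 := hd.add ((hasDerivAt_id x).const_mul C)
        rw [mul_one] at h1
        exact h1
      rw [hgd.deriv]
      linarith
  have h0 : (0 : ℝ) ∈ Set.Icc (0 : ℝ) T := ⟨le_rfl, hT.le⟩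
  have := hmono h0 ht ht.1
  simp only [hg, mul_zero, add_zero] at this
  linarith
end
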